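/- Let γ > 0, 0 ≤ μ_a < 1, 1 ≤ μ_b < 2, a(x) = x^{μ_a} on [0,1], b(x) = (1+x)^{μ_b} on [−1,0]. Then for every f ∈ L²(0,1), g ∈ L²(−1,0) and c ∈ ℂ, there exists a unique pair (u, w) with u ∈ V²_a(0,1) and w ∈ V²_b(−1,0) such that (a u')' = f a.e. on (0,1), (b w')' = g a.e. on (−1,0), u(0) = w(0), lim_{x→0⁺}(a u')(x) = (b w')(0), and γ u(1) + u'(1) = c. Moreover, for this solution (b w')(0) = ∫_{−1}^0 g(r) dr. -/

import Mathlib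

open MeasureTheory Set Filter Topology

/-- `u ∈ V¹_α(x₀, ℓ)` (complex-valued): `u ∈ L²(x₀, ℓ)`, `u` is locally absolutely
continuous on `(x₀, ℓ]` with a.e. derivative `u'` (expressed via the fundamental theorem of
calculus on compact subintervals of `(x₀, ℓ]`), and `√α · u' ∈ L²(x₀, ℓ)`. -/
def MemV1C (x₀ ℓ : ℝ) (α : ℝ → ℝ) (u u' : ℝ → ℂ) : Prop :=
  MemLp u 2 (volume.restrict (Ioo x₀ ℓ)) ∧
  (∀ x y : ℝ, x₀ < x → x ≤ y → y ≤ ℓ →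
    IntervalIntegrable u' volume x y ∧ u y - u x = ∫ t in x..y, u' t) ∧
  MemLp (fun x => Real.sqrt (α x) • u' x) 2 (volume.restrict (Ioo x₀ ℓ))

/-- `u ∈ V²_α(x₀, ℓ)` (complex-valued): `u ∈ V¹_α(x₀, ℓ)` and `α·u' ∈ H¹(x₀, ℓ)`, i.e.
`α·u' ∈ L²`, it is absolutely continuous with a.e. derivative `g' = (α u')' ∈ L²`. -/
def MemV2C (x₀ ℓ : ℝ) (α : ℝ → ℝ) (u u' g' : ℝ → ℂ) : Prop :=
  MemV1C x₀ ℓ α u u' ∧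
  MemLp (fun x => α x • u' x) 2 (volume.restrict (Ioo x₀ ℓ)) ∧
  MemLp g' 2 (volume.restrict (Ioo x₀ ℓ)) ∧
  ∀ x y : ℝ, x₀ < x → x ≤ y → y ≤ ℓ →
    IntervalIntegrable g' volume x y ∧ α y • u' y - α x • u' x = ∫ t in x..y, g' t

/-- The boundary value problem for the resolvent at `0` (strongly degenerate left string,
`1 ≤ μ_b < 2`): `u ∈ V²_a(0,1)`, `w ∈ V²_b(-1,0)`, `(a u')' = f` a.e. on `(0,1)`,
`(b w')' = g` a.e. on `(-1,0)`, `u(0) = w(0)`, `lim_{x→0⁺}(a u')(x) = (b w')(0)`, and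
`γ u(1) + u'(1) = c`. -/
def SolStrong (γ μa μb : ℝ) (f g : ℝ → ℂ) (c : ℂ) (u u' gu w w' gw : ℝ → ℂ) : Prop :=
  MemV2C 0 1 (fun x => x ^ μa) u u' gu ∧
  MemV2C (-1) 0 (fun x => (1 + x) ^ μb) w w' gw ∧
  gu =ᵐ[volume.restrict (Ioo (0 : ℝ) 1)] f ∧
  gw =ᵐ[volume.restrict (Ioo (-1 : ℝ) 0)] g ∧
  Tendsto u (𝓝[>] (0 : ℝ)) (𝓝 (w 0)) ∧
  Tendsto (fun x : ℝ => (x ^ μa : ℝ) • u' x) (𝓝[>] (0 : ℝ))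
    (𝓝 ((((1 : ℝ) + 0) ^ μb : ℝ) • w' 0)) ∧
  (γ : ℂ) * u 1 + u' 1 = c

noncomputable section SurjAux

lemma ae_ne_pt (r : ℝ) : ∀ᵐ t : ℝ ∂volume, t ≠ r := by
  rw [ae_iff]
  simp only [ne_eq, not_not, setOf_eq_eq_singleton]
  exact measure_singleton r

lemma norm_intervalIntegral_le (h : ℝ → ℂ) (hh : Integrable h volume) (a b : ℝ) :
    ‖∫ t in a..b, h t‖ ≤ ∫ t, ‖h t‖ := by
  have key : ∀ a b : ℝ, a ≤ b → ‖∫ t in a..b, h t‖ ≤ ∫ t, ‖h t‖ := by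
    intro a b hab
    refine le_trans (intervalIntegral.norm_integral_le_integral_norm hab) ?_
    rw [intervalIntegral.integral_of_le hab]
    exact setIntegral_le_integral hh.norm (Eventually.of_forall fun t => norm_nonneg _)
  rcases le_total a b with hab | hab
  · exact key a b hab
  · rw [intervalIntegral.integral_symm b a, norm_neg]
    exact key b a hab

lemma setIntegral_norm_le (h : ℝ → ℂ) (hh : MemLp h 2 volume) (s : Set ℝ)
    (hs : MeasurableSet s) (hμ : volume s ≠ ⊤) :
    ∫ t in s, ‖h t‖ ≤ Real.sqrt (∫ t, ‖h t‖ ^ (2:ℝ)) * Real.sqrt ((volume s).toReal) := by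
  have h2 : ENNReal.ofReal (2:ℝ) = 2 := by norm_num
  have hind : MemLp (s.indicator fun _ => (1:ℝ)) (ENNReal.ofReal (2:ℝ)) volume := by
    rw [h2]; exact memLp_indicator_const 2 hs 1 (Or.inr hμ)
  have hnorm : MemLp (fun t => ‖h t‖) (ENNReal.ofReal (2:ℝ)) volume := by
    rw [h2]; exact hh.norm
  have hpq : Real.HolderConjugate 2 2 := by constructor <;> norm_num
  have hind' : MemLp (fun t => (s.indicator fun _ => (1:ℝ)) t) (ENNReal.ofReal (2:ℝ)) volume := hind
  have hg0 : (0:ℝ → ℝ) ≤ᵐ[volume] (fun t => (s.indicator fun _ => (1:ℝ)) t) :=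
    Eventually.of_forall fun t => Set.indicator_apply_nonneg fun _ => zero_le_one
  have hf0 : (0:ℝ → ℝ) ≤ᵐ[volume] (fun t => ‖h t‖) :=
    Eventually.of_forall fun t => norm_nonneg (h t)
  have H := integral_mul_le_Lp_mul_Lq_of_nonneg (f := fun t => ‖h t‖)
    (g := fun t => (s.indicator fun _ => (1:ℝ)) t) hpq hf0 hg0 hnorm hind'
  have hL : ∫ t, ‖h t‖ * (s.indicator fun _ => (1:ℝ)) t = ∫ t in s, ‖h t‖ := by
    rw [← integral_indicator hs]
    congr 1 with t
    by_cases ht : t ∈ s <;> simp [Set.indicator_apply, ht]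
  have hR : ∫ t, ((s.indicator fun _ => (1:ℝ)) t) ^ (2:ℝ) = (volume s).toReal := by
    have : ∀ t, ((s.indicator fun _ => (1:ℝ)) t) ^ (2:ℝ) = (s.indicator fun _ => (1:ℝ)) t := by
      intro t; by_cases ht : t ∈ s <;> simp [Set.indicator_apply, ht, Real.zero_rpow (by norm_num : (2:ℝ) ≠ 0)]
    rw [show (fun t => ((s.indicator fun _ => (1:ℝ)) t) ^ (2:ℝ)) = (s.indicator fun _ => (1:ℝ)) from funext this]
    rw [integral_indicator_const (1:ℝ) hs]
    simp [Measure.real]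
  rw [hL, hR] at H
  calc ∫ t in s, ‖h t‖ ≤ (∫ t, ‖h t‖ ^ (2:ℝ)) ^ ((1:ℝ)/2) * ((volume s).toReal) ^ ((1:ℝ)/2) := H
    _ = Real.sqrt (∫ t, ‖h t‖ ^ (2:ℝ)) * Real.sqrt ((volume s).toReal) := by
        rw [Real.sqrt_eq_rpow, Real.sqrt_eq_rpow]


section Constr

variable (μa μb γ : ℝ) (f g : ℝ → ℂ) (c : ℂ)

def fI : ℝ → ℂ := (Ioo (0:ℝ) 1).indicator f
def gI : ℝ → ℂ := (Ioo (-1:ℝ) 0).indicator g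
def FF (x : ℝ) : ℂ := ∫ t in (0:ℝ)..x, fI f t
def GG (x : ℝ) : ℂ := ∫ t in (-1:ℝ)..x, gI g t
def AA : ℂ := ∫ r in Ioo (-1:ℝ) 0, g r
def du (x : ℝ) : ℂ := ((x ^ (-μa) : ℝ) : ℂ) * (AA g + FF f x)
def uD : ℝ → ℂ := (Ioo (0:ℝ) 1).indicator (du μa f g)
def U1 : ℂ := (c - (AA g + FF f 1)) / γ
def uu (x : ℝ) : ℂ := U1 γ f g c + ∫ t in (1:ℝ)..x, uD μa f g t
def dw (x : ℝ) : ℂ := (((1+x) ^ (-μb) : ℝ) : ℂ) * GG g x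
def wD : ℝ → ℂ := (Ioo (-1:ℝ) 0).indicator (dw μb g)
def ww (x : ℝ) : ℂ := uu μa γ f g c 0 + ∫ t in (0:ℝ)..x, wD μb g t

variable {μa μb γ : ℝ} {f g} {c : ℂ}

lemma hfI_int (hf : MemLp f 2 (volume.restrict (Ioo (0 : ℝ) 1))) :
    Integrable (fI f) volume := by
  have : IntegrableOn f (Ioo (0:ℝ) 1) volume := MemLp.integrable (by norm_num) hf
  exact this.integrable_indicator measurableSet_Ioo

lemma hgI_int (hg : MemLp g 2 (volume.restrict (Ioo (-1 : ℝ) 0))) :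
    Integrable (gI g) volume := by
  have : IntegrableOn g (Ioo (-1:ℝ) 0) volume := MemLp.integrable (by norm_num) hg
  exact this.integrable_indicator measurableSet_Ioo

lemma hgI_mem2 (hg : MemLp g 2 (volume.restrict (Ioo (-1 : ℝ) 0))) :
    MemLp (gI g) 2 volume :=
  (memLp_indicator_iff_restrict measurableSet_Ioo).mpr hg

lemma hFF_cont (hf : MemLp f 2 (volume.restrict (Ioo (0 : ℝ) 1))) : Continuous (FF f) :=
  (hfI_int hf).continuous_primitive 0

lemma hGG_cont (hg : MemLp g 2 (volume.restrict (Ioo (-1 : ℝ) 0))) : Continuous (GG g) :=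
  (hgI_int hg).continuous_primitive (-1)

lemma hFF_bound (hf : MemLp f 2 (volume.restrict (Ioo (0 : ℝ) 1))) (x : ℝ) :
    ‖FF f x‖ ≤ ∫ t, ‖fI f t‖ :=
  norm_intervalIntegral_le _ (hfI_int hf) _ _

lemma hGG_bound (hg : MemLp g 2 (volume.restrict (Ioo (-1 : ℝ) 0))) (x : ℝ) :
    ‖GG g x‖ ≤ ∫ t, ‖gI g t‖ :=
  norm_intervalIntegral_le _ (hgI_int hg) _ _

/-- Cauchy–Schwarz bound on the primitive `GG`. -/
lemma hGG_sqrt (hg : MemLp g 2 (volume.restrict (Ioo (-1 : ℝ) 0))) {x : ℝ}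
    (hx1 : -1 ≤ x) (hx0 : x ≤ 0) :
    ‖GG g x‖ ≤ Real.sqrt (∫ t, ‖gI g t‖ ^ (2:ℝ)) * Real.sqrt (1+x) := by
  have h1 : ‖GG g x‖ ≤ ∫ t in Ioc (-1:ℝ) x, ‖gI g t‖ := by
    rw [GG, ← intervalIntegral.integral_of_le hx1]
    exact intervalIntegral.norm_integral_le_integral_norm hx1
  have h2 := setIntegral_norm_le (gI g) (hgI_mem2 hg) (Ioc (-1) x) measurableSet_Ioc
    measure_Ioc_lt_top.ne
  have h3 : (volume (Ioc (-1:ℝ) x)).toReal = 1 + x := by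
    rw [Real.volume_Ioc, ENNReal.toReal_ofReal (by linarith)]
    ring
  rw [h3] at h2
  exact h1.trans h2

lemma GG_zero (hg : MemLp g 2 (volume.restrict (Ioo (-1 : ℝ) 0))) : GG g 0 = AA g := by
  rw [GG, intervalIntegral.integral_of_le (by norm_num : (-1:ℝ) ≤ 0), gI,
    setIntegral_indicator measurableSet_Ioo,
    inter_eq_self_of_subset_right Ioo_subset_Ioc_self, AA]

lemma FF_zero : FF f 0 = 0 := intervalIntegral.integral_same

lemma dw_zero (hg : MemLp g 2 (volume.restrict (Ioo (-1 : ℝ) 0))) : dw μb g 0 = AA g := by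
  rw [dw, GG_zero hg]
  norm_num

end Constr

section Uside
variable {μa μb γ : ℝ} {f g : ℝ → ℂ} {c : ℂ}
lemma du_contOn (hf : MemLp f 2 (volume.restrict (Ioo (0 : ℝ) 1))) : ContinuousOn (du μa f g) (Ioi (0:ℝ)) := by
  apply ContinuousOn.mul
  · exact Complex.continuous_ofReal.comp_continuousOn
      (continuousOn_id.rpow_const fun x hx => Or.inl (ne_of_gt hx))
  · exact (continuous_const.add (hFF_cont hf)).continuousOn

lemma du_norm_eq {x : ℝ} (hx : 0 < x) :
    ‖du μa f g x‖ = x ^ (-μa) * ‖AA g + FF f x‖ := by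
  rw [du, norm_mul, Complex.norm_real, Real.norm_eq_abs,
    abs_of_nonneg (Real.rpow_nonneg hx.le _)]

lemma rpow_integrableOn_Ioo {r : ℝ} (hr : -1 < r) :
    IntegrableOn (fun x : ℝ => x ^ r) (Ioo (0:ℝ) 1) volume := by
  have := intervalIntegral.intervalIntegrable_rpow' (a := 0) (b := 1) hr
  rwa [intervalIntegrable_iff_integrableOn_Ioo_of_le (by norm_num)] at this

lemma rpow_shift_integrableOn {r : ℝ} (hr : -1 < r) :
    IntegrableOn (fun x : ℝ => (1+x) ^ r) (Ioo (-1:ℝ) 0) volume := by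
  have h1 := (intervalIntegral.intervalIntegrable_rpow' (a := 0) (b := 1) hr).comp_add_left 1
  simp only [zero_sub, sub_self] at h1
  rwa [intervalIntegrable_iff_integrableOn_Ioo_of_le (by norm_num)] at h1

lemma huD_int (hμa0 : 0 ≤ μa) (hμa1 : μa < 1)
    (hf : MemLp f 2 (volume.restrict (Ioo (0 : ℝ) 1)))
    (hg : MemLp g 2 (volume.restrict (Ioo (-1 : ℝ) 0))) :
    Integrable (uD μa f g) volume := by
  rw [uD, integrable_indicator_iff measurableSet_Ioo]
  have hdom : IntegrableOn (fun x : ℝ => (‖AA g‖ + ∫ t, ‖fI f t‖) * x ^ (-μa))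
      (Ioo (0:ℝ) 1) volume :=
    (rpow_integrableOn_Ioo (by linarith)).const_mul _
  refine Integrable.mono' hdom (((du_contOn hf).mono Ioo_subset_Ioi_self).aestronglyMeasurable measurableSet_Ioo) ?_
  rw [ae_restrict_iff' measurableSet_Ioo]
  refine Eventually.of_forall fun x hx => ?_
  rw [du_norm_eq hx.1, mul_comm]
  apply mul_le_mul_of_nonneg_right _ (Real.rpow_nonneg hx.1.le _)
  exact (norm_add_le _ _).trans (by gcongr; exact hFF_bound hf x)

lemma huu_cont (hμa0 : 0 ≤ μa) (hμa1 : μa < 1)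
    (hf : MemLp f 2 (volume.restrict (Ioo (0 : ℝ) 1)))
    (hg : MemLp g 2 (volume.restrict (Ioo (-1 : ℝ) 0))) :
    Continuous (uu μa γ f g c) :=
  continuous_const.add ((huD_int hμa0 hμa1 hf hg).continuous_primitive 1)

lemma key_a (hμa0 : 0 ≤ μa) {z : ℝ} (hz : 0 < z) :
    (z ^ μa : ℝ) • du μa f g z = AA g + FF f z := by
  rw [du, Complex.real_smul, ← mul_assoc, ← Complex.ofReal_mul,
    ← Real.rpow_add hz, add_neg_cancel, Real.rpow_zero, Complex.ofReal_one, one_mul]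

lemma uu_sub (hμa0 : 0 ≤ μa) (hμa1 : μa < 1)
    (hf : MemLp f 2 (volume.restrict (Ioo (0 : ℝ) 1)))
    (hg : MemLp g 2 (volume.restrict (Ioo (-1 : ℝ) 0))) (x y : ℝ) :
    uu μa γ f g c y - uu μa γ f g c x = ∫ t in x..y, uD μa f g t := by
  rw [uu, uu, add_sub_add_left_eq_sub]
  exact intervalIntegral.integral_interval_sub_left
    ((huD_int hμa0 hμa1 hf hg).intervalIntegrable)
    ((huD_int hμa0 hμa1 hf hg).intervalIntegrable)

lemma uD_eq_du (x y : ℝ) (hx : 0 < x) (hxy : x ≤ y) (hy : y ≤ 1) :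
    ∫ t in x..y, uD μa f g t = ∫ t in x..y, du μa f g t := by
  apply intervalIntegral.integral_congr_ae
  filter_upwards [ae_ne_pt 1] with t ht1 htm
  rw [Set.uIoc_of_le hxy] at htm
  have : t ∈ Ioo (0:ℝ) 1 := ⟨lt_of_lt_of_le hx htm.1.le, lt_of_le_of_ne (htm.2.trans hy) ht1⟩
  exact Set.indicator_of_mem this _

end Uside

section Uside2
variable {μa μb γ : ℝ} {f g : ℝ → ℂ} {c : ℂ}

lemma memℒp_uu (hμa0 : 0 ≤ μa) (hμa1 : μa < 1)
    (hf : MemLp f 2 (volume.restrict (Ioo (0 : ℝ) 1)))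
    (hg : MemLp g 2 (volume.restrict (Ioo (-1 : ℝ) 0))) :
    MemLp (uu μa γ f g c) 2 (volume.restrict (Ioo (0:ℝ) 1)) := by
  refine MemLp.of_bound ((huu_cont hμa0 hμa1 hf hg).aestronglyMeasurable.restrict)
    (‖U1 γ f g c‖ + ∫ t, ‖uD μa f g t‖) (Eventually.of_forall fun x => ?_)
  rw [uu]
  exact (norm_add_le _ _).trans (by
    gcongr
    exact norm_intervalIntegral_le _ (huD_int hμa0 hμa1 hf hg) _ _)

lemma memℒp_sqrt_a_du (hμa0 : 0 ≤ μa) (hμa1 : μa < 1)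
    (hf : MemLp f 2 (volume.restrict (Ioo (0 : ℝ) 1)))
    (hg : MemLp g 2 (volume.restrict (Ioo (-1 : ℝ) 0))) :
    MemLp (fun x => Real.sqrt (x ^ μa) • du μa f g x) 2 (volume.restrict (Ioo (0:ℝ) 1)) := by
  set C : ℝ := ‖AA g‖ + ∫ t, ‖fI f t‖ with hC
  have hC0 : 0 ≤ C := by
    have := norm_nonneg (AA g)
    have h2 : 0 ≤ ∫ t, ‖fI f t‖ := integral_nonneg fun t => norm_nonneg _
    linarith
  have hdom : MemLp (fun x : ℝ => C * x ^ (-(μa/2))) 2 (volume.restrict (Ioo (0:ℝ) 1)) := by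
    have hcont : ContinuousOn (fun x : ℝ => C * x ^ (-(μa/2))) (Ioo (0:ℝ) 1) :=
      continuousOn_const.mul ((continuousOn_id.rpow_const fun x hx => Or.inl (ne_of_gt hx.1)))
    rw [memLp_two_iff_integrable_sq (hcont.aestronglyMeasurable measurableSet_Ioo)]
    have hint : IntegrableOn (fun x : ℝ => C^2 * x ^ (-μa)) (Ioo (0:ℝ) 1) volume :=
      (rpow_integrableOn_Ioo (by linarith)).const_mul _
    refine hint.congr_fun (fun x hx => ?_) measurableSet_Ioo
    rw [mul_pow, ← Real.rpow_natCast (x ^ (-(μa/2))) 2, ← Real.rpow_mul hx.1.le]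
    norm_num
  refine hdom.mono ?_ ?_
  · refine ContinuousOn.aestronglyMeasurable ?_ measurableSet_Ioo
    refine ContinuousOn.smul (f := fun x : ℝ => Real.sqrt (x ^ μa)) ?_ ((du_contOn hf).mono Ioo_subset_Ioi_self)
    exact Real.continuous_sqrt.comp_continuousOn
      (continuousOn_id.rpow_const fun x hx => Or.inl (ne_of_gt hx.1))
  · rw [ae_restrict_iff' measurableSet_Ioo]
    refine Eventually.of_forall fun x hx => ?_
    have hx0 : (0:ℝ) < x := hx.1
    rw [norm_smul, Real.norm_eq_abs, abs_of_nonneg (Real.sqrt_nonneg _), du_norm_eq hx0]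
    have hsq : Real.sqrt (x ^ μa) = x ^ (μa/2) := by
      rw [Real.sqrt_eq_rpow, ← Real.rpow_mul hx0.le]
      congr 1
      ring
    rw [hsq]
    have : x ^ (μa/2) * (x ^ (-μa) * ‖AA g + FF f x‖)
        = (x ^ (μa/2) * x ^ (-μa)) * ‖AA g + FF f x‖ := by ring
    rw [this, ← Real.rpow_add hx0]
    have hexp : μa/2 + -μa = -(μa/2) := by ring
    rw [hexp, Real.norm_eq_abs, abs_of_nonneg (by positivity)]
    rw [mul_comm C _]
    apply mul_le_mul_of_nonneg_left _ (Real.rpow_nonneg hx0.le _)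
    rw [hC]
    exact (norm_add_le _ _).trans (by gcongr; exact hFF_bound hf x)

lemma memℒp_a_du (hμa0 : 0 ≤ μa) (hμa1 : μa < 1)
    (hf : MemLp f 2 (volume.restrict (Ioo (0 : ℝ) 1)))
    (hg : MemLp g 2 (volume.restrict (Ioo (-1 : ℝ) 0))) :
    MemLp (fun x : ℝ => (x ^ μa : ℝ) • du μa f g x) 2 (volume.restrict (Ioo (0:ℝ) 1)) := by
  have hmem : MemLp (fun x : ℝ => AA g + FF f x) 2 (volume.restrict (Ioo (0:ℝ) 1)) := by
    refine MemLp.of_bound ((continuous_const.add (hFF_cont hf)).aestronglyMeasurable.restrict)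
      (‖AA g‖ + ∫ t, ‖fI f t‖) (Eventually.of_forall fun x => ?_)
    exact (norm_add_le _ _).trans (by gcongr; exact hFF_bound hf x)
  refine hmem.ae_eq ?_
  rw [Filter.EventuallyEq, ae_restrict_iff' measurableSet_Ioo]
  exact Eventually.of_forall fun x hx => (key_a hμa0 hx.1).symm

lemma memℒp_fI (hf : MemLp f 2 (volume.restrict (Ioo (0 : ℝ) 1))) :
    MemLp (fI f) 2 (volume.restrict (Ioo (0:ℝ) 1)) :=
  hf.ae_eq (indicator_ae_eq_restrict measurableSet_Ioo).symm

lemma memℒp_gI (hg : MemLp g 2 (volume.restrict (Ioo (-1 : ℝ) 0))) :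
    MemLp (gI g) 2 (volume.restrict (Ioo (-1:ℝ) 0)) :=
  hg.ae_eq (indicator_ae_eq_restrict measurableSet_Ioo).symm

end Uside2

section Wside
variable {μa μb γ : ℝ} {f g : ℝ → ℂ} {c : ℂ}

def sp (μb : ℝ) : ℝ := min ((-1 - μb)/2) (-5/4)
def sg (μb : ℝ) : ℝ := -(1 + sp μb)
def Mg (g : ℝ → ℂ) : ℝ := Real.sqrt (∫ t, ‖gI g t‖ ^ (2:ℝ))

lemma Mg_nonneg : 0 ≤ Mg g := Real.sqrt_nonneg _

lemma sp_le (hμb2 : μb < 2) : sp μb ≤ 1/2 - μb := by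
  rcases le_total μb (3/2) with h | h
  · exact le_trans (min_le_right _ _) (by linarith)
  · exact le_trans (min_le_left _ _) (by linarith)

lemma sp_lt (hμb2 : μb < 2) : -3/2 < sp μb := by
  apply lt_min <;> linarith

lemma sp_le' : sp μb ≤ -5/4 := min_le_right _ _

lemma sg_pos : 0 < sg μb := by
  have := sp_le' (μb := μb); rw [sg]; linarith

lemma sg_lt_half (hμb2 : μb < 2) : sg μb < 1/2 := by
  have := sp_lt hμb2; rw [sg]; linarith

lemma sp_ne : sp μb ≠ -1 := by
  have := sp_le' (μb := μb); intro h; rw [h] at this; norm_num at this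

lemma dw_contOn (hg : MemLp g 2 (volume.restrict (Ioo (-1 : ℝ) 0))) :
    ContinuousOn (dw μb g) (Ioi (-1:ℝ)) := by
  apply ContinuousOn.mul
  · refine Complex.continuous_ofReal.comp_continuousOn ?_
    refine ContinuousOn.rpow_const ((continuous_const.add continuous_id').continuousOn) ?_
    intro x hx
    exact Or.inl (by intro h; simp only [mem_Ioi] at hx; linarith)
  · exact (hGG_cont hg).continuousOn

lemma dw_norm_eq {x : ℝ} (hx : -1 < x) :
    ‖dw μb g x‖ = (1+x) ^ (-μb) * ‖GG g x‖ := by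
  rw [dw, norm_mul, Complex.norm_real, Real.norm_eq_abs,
    abs_of_nonneg (Real.rpow_nonneg (by linarith) _)]

lemma hwD_intOn (hg : MemLp g 2 (volume.restrict (Ioo (-1 : ℝ) 0)))
    {x : ℝ} (hx : -1 < x) : IntegrableOn (wD μb g) (Ioc x 0) volume := by
  rw [wD, IntegrableOn, integrable_indicator_iff measurableSet_Ioo, IntegrableOn,
    Measure.restrict_restrict measurableSet_Ioo]
  have hbase : IntegrableOn (dw μb g) (Icc x 0) volume := by
    refine ContinuousOn.integrableOn_Icc ((dw_contOn hg).mono fun t ht => ?_)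
    exact lt_of_lt_of_le hx ht.1
  exact hbase.mono_set fun t ht => ⟨ht.2.1.le, ht.2.2⟩

lemma wD_norm_le (hμb1 : 1 ≤ μb) (hμb2 : μb < 2)
    (hg : MemLp g 2 (volume.restrict (Ioo (-1 : ℝ) 0)))
    {t : ℝ} (ht1 : -1 < t) (ht0 : t ≤ 0) :
    ‖wD μb g t‖ ≤ Mg g * (1+t) ^ (sp μb) := by
  have hp : (0:ℝ) < 1 + t := by linarith
  by_cases ht : t ∈ Ioo (-1:ℝ) 0
  · rw [wD, Set.indicator_of_mem ht, dw_norm_eq ht1]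
    have h1 : ‖GG g t‖ ≤ Mg g * Real.sqrt (1+t) := hGG_sqrt hg ht1.le ht0
    have h2 : (1+t) ^ (-μb) * ‖GG g t‖ ≤ (1+t) ^ (-μb) * (Mg g * (1+t) ^ ((1:ℝ)/2)) := by
      rw [← Real.sqrt_eq_rpow]
      exact mul_le_mul_of_nonneg_left h1 (Real.rpow_nonneg hp.le _)
    refine h2.trans ?_
    have h3 : (1+t) ^ (-μb) * (Mg g * (1+t) ^ ((1:ℝ)/2))
        = Mg g * (1+t) ^ (-μb + 1/2) := by
      rw [Real.rpow_add hp]; ring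
    rw [h3]
    apply mul_le_mul_of_nonneg_left _ (Mg_nonneg)
    apply Real.rpow_le_rpow_of_exponent_ge hp (by linarith)
    have := sp_le (μb := μb) hμb2; linarith
  · rw [wD, Set.indicator_of_notMem ht, norm_zero]
    exact mul_nonneg Mg_nonneg (Real.rpow_nonneg hp.le _)

lemma hPB (hμb1 : 1 ≤ μb) (hμb2 : μb < 2)
    (hg : MemLp g 2 (volume.restrict (Ioo (-1 : ℝ) 0)))
    {x : ℝ} (hx : x ∈ Ioo (-1:ℝ) 0) :
    ∫ t in Ioc x 0, ‖wD μb g t‖ ≤ (Mg g / sg μb) * (1+x) ^ (-(sg μb)) := by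
  have hx1 : (-1:ℝ) < x := hx.1
  have hx0 : x ≤ 0 := hx.2.le
  have hp : (0:ℝ) < 1 + x := by linarith
  have hbnd_cont : ContinuousOn (fun t : ℝ => Mg g * (1+t) ^ (sp μb)) (Icc x 0) := by
    refine continuousOn_const.mul (ContinuousOn.rpow_const
      ((continuous_const.add continuous_id').continuousOn) fun t ht => Or.inl ?_)
    intro h; have := ht.1; linarith
  have h1 : ∫ t in Ioc x 0, ‖wD μb g t‖ ≤ ∫ t in Ioc x 0, Mg g * (1+t) ^ (sp μb) := by
    refine setIntegral_mono_on (hwD_intOn hg hx1).norm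
      ((hbnd_cont.integrableOn_Icc).mono_set Ioc_subset_Icc_self) measurableSet_Ioc
      fun t ht => wD_norm_le hμb1 hμb2 hg (lt_trans hx1 ht.1) ht.2
  have h2 : ∫ t in Ioc x 0, Mg g * (1+t) ^ (sp μb)
      = Mg g * ∫ t in x..(0:ℝ), (1+t) ^ (sp μb) := by
    rw [intervalIntegral.integral_of_le hx0, MeasureTheory.integral_const_mul]
  have h3 : ∫ t in x..(0:ℝ), (1+t) ^ (sp μb)
      = (1 - (1+x) ^ (-(sg μb))) / (sp μb + 1) := by
    have := intervalIntegral.integral_comp_add_left (a := x) (b := (0:ℝ))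
      (fun u : ℝ => u ^ (sp μb)) 1
    rw [this, integral_rpow (Or.inr ⟨sp_ne, notMem_uIcc_of_lt hp (by norm_num)⟩)]
    have h10 : (1:ℝ) + 0 = 1 := by norm_num
    rw [h10, Real.one_rpow]
    have : sp μb + 1 = -(sg μb) := by rw [sg]; ring
    rw [this]
  rw [h2, h3] at h1
  refine h1.trans ?_
  have hy : (0:ℝ) ≤ (1+x) ^ (-(sg μb)) := Real.rpow_nonneg hp.le _
  have hsg : (0:ℝ) < sg μb := sg_pos
  have heq : Mg g * ((1 - (1+x) ^ (-(sg μb))) / (sp μb + 1))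
      = Mg g * (((1+x) ^ (-(sg μb)) - 1) / sg μb) := by
    have h' : sp μb + 1 = -(sg μb) := by rw [sg]; ring
    rw [h', div_neg, ← neg_div, neg_sub]
  rw [heq]
  calc Mg g * (((1+x) ^ (-(sg μb)) - 1) / sg μb)
      ≤ Mg g * ((1+x) ^ (-(sg μb)) / sg μb) :=
        mul_le_mul_of_nonneg_left ((div_le_div_iff_of_pos_right hsg).mpr (by linarith)) Mg_nonneg
    _ = (Mg g / sg μb) * (1+x) ^ (-(sg μb)) := by ring

end Wside

section Wside2
variable {μa μb γ : ℝ} {f g : ℝ → ℂ} {c : ℂ}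

lemma ww_contOn (hμa0 : 0 ≤ μa) (hμa1 : μa < 1)
    (hf : MemLp f 2 (volume.restrict (Ioo (0 : ℝ) 1)))
    (hg : MemLp g 2 (volume.restrict (Ioo (-1 : ℝ) 0))) :
    ContinuousOn (ww μa μb γ f g c) (Ioo (-1:ℝ) 0) := by
  intro x0 hx0
  apply ContinuousAt.continuousWithinAt
  set b : ℝ := (-1 + x0)/2 with hbdef
  have hb1 : (-1:ℝ) < b := by rw [hbdef]; have := hx0.1; linarith
  have hbx : b < x0 := by rw [hbdef]; have := hx0.1; linarith
  set wDb : ℝ → ℂ := (Ioo b 0).indicator (dw μb g) with hwDb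
  have hwDb_int : Integrable wDb volume := by
    rw [hwDb, integrable_indicator_iff measurableSet_Ioo]
    refine (ContinuousOn.integrableOn_Icc ((dw_contOn hg).mono fun t ht => ?_)).mono_set
      Ioo_subset_Icc_self
    exact lt_of_lt_of_le hb1 ht.1
  have hcontF1 : Continuous (fun x => uu μa γ f g c 0 + ∫ t in (0:ℝ)..x, wDb t) :=
    continuous_const.add (hwDb_int.continuous_primitive 0)
  refine ContinuousAt.congr hcontF1.continuousAt ?_
  have hmem : Ioo b 0 ∈ 𝓝 x0 := isOpen_Ioo.mem_nhds ⟨hbx, hx0.2⟩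
  filter_upwards [hmem] with x hx
  rw [ww]
  congr 1
  refine intervalIntegral.integral_congr fun t ht => ?_
  rw [Set.uIcc_of_ge hx.2.le] at ht
  by_cases htneg : t < 0
  · have h1 : t ∈ Ioo (-1:ℝ) 0 := ⟨lt_trans hb1 (lt_of_lt_of_le hx.1 ht.1), htneg⟩
    have h2 : t ∈ Ioo b 0 := ⟨lt_of_lt_of_le hx.1 ht.1, htneg⟩
    rw [wD, hwDb, Set.indicator_of_mem h1, Set.indicator_of_mem h2]
  · have h1 : t ∉ Ioo (-1:ℝ) 0 := fun h => htneg h.2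
    have h2 : t ∉ Ioo b 0 := fun h => htneg h.2
    rw [wD, hwDb, Set.indicator_of_notMem h1, Set.indicator_of_notMem h2]

lemma memℒp_rpow_shift (hr : -1 < -(2 * sg μb)) :
    MemLp (fun x : ℝ => (1+x) ^ (-(sg μb))) 2 (volume.restrict (Ioo (-1:ℝ) 0)) := by
  have hcont : ContinuousOn (fun x : ℝ => (1+x) ^ (-(sg μb))) (Ioo (-1:ℝ) 0) := by
    refine ContinuousOn.rpow_const ((continuous_const.add continuous_id').continuousOn)
      fun t ht => Or.inl ?_
    intro h; have := ht.1; linarith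
  rw [memLp_two_iff_integrable_sq (hcont.aestronglyMeasurable measurableSet_Ioo)]
  refine ((rpow_shift_integrableOn hr).congr_fun (fun x hx => ?_) measurableSet_Ioo)
  have hp : (0:ℝ) < 1 + x := by have := hx.1; linarith
  rw [← Real.rpow_natCast ((1+x) ^ (-(sg μb))) 2, ← Real.rpow_mul hp.le]
  congr 1
  push_cast
  ring

lemma memℒp_ww (hμa0 : 0 ≤ μa) (hμa1 : μa < 1) (hμb1 : 1 ≤ μb) (hμb2 : μb < 2)
    (hf : MemLp f 2 (volume.restrict (Ioo (0 : ℝ) 1)))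
    (hg : MemLp g 2 (volume.restrict (Ioo (-1 : ℝ) 0))) :
    MemLp (ww μa μb γ f g c) 2 (volume.restrict (Ioo (-1:ℝ) 0)) := by
  have hsg : (0:ℝ) < sg μb := sg_pos
  have hdom : MemLp (fun x : ℝ => ‖uu μa γ f g c 0‖ + (Mg g / sg μb) * (1+x) ^ (-(sg μb)))
      2 (volume.restrict (Ioo (-1:ℝ) 0)) := by
    refine MemLp.add (f := fun _ : ℝ => ‖uu μa γ f g c 0‖)
      (g := fun x : ℝ => (Mg g / sg μb) * (1+x) ^ (-(sg μb))) (memLp_const _) ?_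
    have h2sg : -1 < -(2 * sg μb) := by have := sg_lt_half (μb := μb) hμb2; linarith
    exact (memℒp_rpow_shift h2sg).const_mul _
  refine hdom.mono ((ww_contOn hμa0 hμa1 hf hg).aestronglyMeasurable measurableSet_Ioo) ?_
  rw [ae_restrict_iff' measurableSet_Ioo]
  refine Eventually.of_forall fun x hx => ?_
  have hp : (0:ℝ) < 1 + x := by have := hx.1; linarith
  have hb : ‖ww μa μb γ f g c x‖ ≤ ‖uu μa γ f g c 0‖ + (Mg g / sg μb) * (1+x) ^ (-(sg μb)) := by
    rw [ww]
    refine (norm_add_le _ _).trans ?_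
    gcongr
    rw [intervalIntegral.integral_symm x 0, norm_neg,
      intervalIntegral.integral_of_le hx.2.le]
    exact (norm_integral_le_integral_norm _).trans (hPB hμb1 hμb2 hg hx)
  refine hb.trans (le_of_eq ?_)
  rw [Real.norm_eq_abs, abs_of_nonneg (add_nonneg (norm_nonneg _)
    (mul_nonneg (div_nonneg Mg_nonneg hsg.le) (Real.rpow_nonneg hp.le _)))]

lemma key_b {z : ℝ} (hz : -1 < z) :
    ((1+z) ^ μb : ℝ) • dw μb g z = GG g z := by
  have hp : (0:ℝ) < 1 + z := by linarith
  rw [dw, Complex.real_smul, ← mul_assoc, ← Complex.ofReal_mul,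
    ← Real.rpow_add hp, add_neg_cancel, Real.rpow_zero, Complex.ofReal_one, one_mul]

lemma memℒp_b_dw (hμb1 : 1 ≤ μb) (hμb2 : μb < 2)
    (hg : MemLp g 2 (volume.restrict (Ioo (-1 : ℝ) 0))) :
    MemLp (fun x : ℝ => ((1+x) ^ μb : ℝ) • dw μb g x) 2 (volume.restrict (Ioo (-1:ℝ) 0)) := by
  have hmem : MemLp (GG g) 2 (volume.restrict (Ioo (-1:ℝ) 0)) := by
    refine MemLp.of_bound ((hGG_cont hg).aestronglyMeasurable.restrict)
      (∫ t, ‖gI g t‖) (Eventually.of_forall fun x => hGG_bound hg x)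
  refine hmem.ae_eq ?_
  rw [Filter.EventuallyEq, ae_restrict_iff' measurableSet_Ioo]
  exact Eventually.of_forall fun x hx => (key_b hx.1).symm

lemma memℒp_sqrt_b_dw (hμb1 : 1 ≤ μb) (hμb2 : μb < 2)
    (hg : MemLp g 2 (volume.restrict (Ioo (-1 : ℝ) 0))) :
    MemLp (fun x => Real.sqrt ((1+x) ^ μb) • dw μb g x) 2 (volume.restrict (Ioo (-1:ℝ) 0)) := by
  have hdom : MemLp (fun x : ℝ => Mg g * (1+x) ^ ((1-μb)/2)) 2
      (volume.restrict (Ioo (-1:ℝ) 0)) := by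
    have hcont : ContinuousOn (fun x : ℝ => Mg g * (1+x) ^ ((1-μb)/2)) (Ioo (-1:ℝ) 0) := by
      refine continuousOn_const.mul (ContinuousOn.rpow_const
        ((continuous_const.add continuous_id').continuousOn) fun t ht => Or.inl ?_)
      intro h; have := ht.1; linarith
    rw [memLp_two_iff_integrable_sq (hcont.aestronglyMeasurable measurableSet_Ioo)]
    have hint : IntegrableOn (fun x : ℝ => (Mg g)^2 * (1+x) ^ (1-μb)) (Ioo (-1:ℝ) 0) volume :=
      (rpow_shift_integrableOn (by linarith)).const_mul _
    refine hint.congr_fun (fun x hx => ?_) measurableSet_Ioo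
    have hp : (0:ℝ) < 1 + x := by have := hx.1; linarith
    rw [mul_pow, ← Real.rpow_natCast ((1+x) ^ ((1-μb)/2)) 2, ← Real.rpow_mul hp.le]
    congr 2
    push_cast
    ring
  refine hdom.mono ?_ ?_
  · refine ContinuousOn.aestronglyMeasurable ?_ measurableSet_Ioo
    refine ContinuousOn.smul (f := fun x : ℝ => Real.sqrt ((1+x) ^ μb)) ?_ ((dw_contOn hg).mono fun t (ht : t ∈ Ioo (-1:ℝ) 0) => lt_of_lt_of_le ht.1 (le_refl t) )
    · exact Real.continuous_sqrt.comp_continuousOn (ContinuousOn.rpow_const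
        ((continuous_const.add continuous_id').continuousOn) fun t ht => Or.inl
        (by intro h; have := ht.1; linarith))
  · rw [ae_restrict_iff' measurableSet_Ioo]
    refine Eventually.of_forall fun x hx => ?_
    have hx1 : (-1:ℝ) < x := hx.1
    have hp : (0:ℝ) < 1 + x := by linarith
    rw [norm_smul, Real.norm_eq_abs, abs_of_nonneg (Real.sqrt_nonneg _), dw_norm_eq hx1]
    have hsq : Real.sqrt ((1+x) ^ μb) = (1+x) ^ (μb/2) := by
      rw [Real.sqrt_eq_rpow, ← Real.rpow_mul hp.le]
      congr 1
      ring
    rw [hsq]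
    have h1 : ‖GG g x‖ ≤ Mg g * (1+x) ^ ((1:ℝ)/2) := by
      rw [← Real.sqrt_eq_rpow]
      exact hGG_sqrt hg hx1.le hx.2.le
    have h2 := mul_le_mul_of_nonneg_left (mul_le_mul_of_nonneg_left h1
      (Real.rpow_nonneg hp.le (-μb))) (Real.rpow_nonneg hp.le (μb/2))
    refine h2.trans (le_of_eq ?_)
    rw [Real.norm_eq_abs, abs_of_nonneg (mul_nonneg Mg_nonneg (Real.rpow_nonneg hp.le _))]
    rw [show (1+x) ^ (μb/2) * ((1+x) ^ (-μb) * (Mg g * (1+x) ^ ((1:ℝ)/2)))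
      = Mg g * ((1+x) ^ (μb/2) * (1+x) ^ (-μb) * (1+x) ^ ((1:ℝ)/2)) from by ring]
    rw [← Real.rpow_add hp, ← Real.rpow_add hp]
    congr 2
    ring

end Wside2

section Assemble
variable {μa μb γ : ℝ} {f g : ℝ → ℂ} {c : ℂ}

lemma hwD_ii (hg : MemLp g 2 (volume.restrict (Ioo (-1 : ℝ) 0)))
    {x : ℝ} (hx : -1 < x) (hx0 : x ≤ 0) :
    IntervalIntegrable (wD μb g) volume 0 x := by
  rw [intervalIntegrable_iff, uIoc_comm, Set.uIoc_of_le hx0]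
  exact hwD_intOn hg hx

lemma ww_sub (hg : MemLp g 2 (volume.restrict (Ioo (-1 : ℝ) 0)))
    {x y : ℝ} (hx : -1 < x) (hxy : x ≤ y) (hy : y ≤ 0) :
    ww μa μb γ f g c y - ww μa μb γ f g c x = ∫ t in x..y, wD μb g t := by
  rw [ww, ww, add_sub_add_left_eq_sub]
  exact intervalIntegral.integral_interval_sub_left
    (hwD_ii hg (lt_of_lt_of_le hx hxy) hy) (hwD_ii hg hx (hxy.trans hy))

lemma wD_eq_dw (hg : MemLp g 2 (volume.restrict (Ioo (-1 : ℝ) 0)))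
    {x y : ℝ} (hx : -1 < x) (hxy : x ≤ y) (hy : y ≤ 0) :
    ∫ t in x..y, wD μb g t = ∫ t in x..y, dw μb g t := by
  apply intervalIntegral.integral_congr_ae
  filter_upwards [ae_ne_pt 0] with t ht0 htm
  rw [Set.uIoc_of_le hxy] at htm
  have : t ∈ Ioo (-1:ℝ) 0 :=
    ⟨lt_of_lt_of_le hx htm.1.le, lt_of_le_of_ne (htm.2.trans hy) ht0⟩
  exact Set.indicator_of_mem this _

lemma dw_ii (hg : MemLp g 2 (volume.restrict (Ioo (-1 : ℝ) 0)))
    {x y : ℝ} (hx : -1 < x) (hxy : x ≤ y) (hy : y ≤ 0) :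
    IntervalIntegrable (dw μb g) volume x y := by
  apply ContinuousOn.intervalIntegrable
  refine (dw_contOn hg).mono fun t ht => ?_
  rw [Set.uIcc_of_le hxy] at ht
  exact lt_of_lt_of_le hx ht.1

lemma du_ii (hf : MemLp f 2 (volume.restrict (Ioo (0 : ℝ) 1)))
    {x y : ℝ} (hx : 0 < x) (hxy : x ≤ y) :
    IntervalIntegrable (du μa f g) volume x y := by
  apply ContinuousOn.intervalIntegrable
  refine (du_contOn hf).mono fun t ht => ?_
  rw [Set.uIcc_of_le hxy] at ht
  exact lt_of_lt_of_le hx ht.1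

lemma memV2_right (hμa0 : 0 ≤ μa) (hμa1 : μa < 1)
    (hf : MemLp f 2 (volume.restrict (Ioo (0 : ℝ) 1)))
    (hg : MemLp g 2 (volume.restrict (Ioo (-1 : ℝ) 0))) :
    MemV2C 0 1 (fun x => x ^ μa) (uu μa γ f g c) (du μa f g) (fI f) := by
  refine ⟨⟨memℒp_uu hμa0 hμa1 hf hg, fun x y hx hxy hy => ?_,
    memℒp_sqrt_a_du hμa0 hμa1 hf hg⟩, memℒp_a_du hμa0 hμa1 hf hg, memℒp_fI hf,
    fun x y hx hxy hy => ?_⟩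
  · refine ⟨du_ii hf hx hxy, ?_⟩
    rw [uu_sub hμa0 hμa1 hf hg, uD_eq_du x y hx hxy hy]
  · refine ⟨(hfI_int hf).intervalIntegrable, ?_⟩
    simp only
    rw [key_a hμa0 (lt_of_lt_of_le hx hxy), key_a hμa0 hx, add_sub_add_left_eq_sub]
    exact intervalIntegral.integral_interval_sub_left
      ((hfI_int hf).intervalIntegrable) ((hfI_int hf).intervalIntegrable)

lemma memV2_left (hμa0 : 0 ≤ μa) (hμa1 : μa < 1) (hμb1 : 1 ≤ μb) (hμb2 : μb < 2)
    (hf : MemLp f 2 (volume.restrict (Ioo (0 : ℝ) 1)))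
    (hg : MemLp g 2 (volume.restrict (Ioo (-1 : ℝ) 0))) :
    MemV2C (-1) 0 (fun x => (1 + x) ^ μb) (ww μa μb γ f g c) (dw μb g) (gI g) := by
  refine ⟨⟨memℒp_ww hμa0 hμa1 hμb1 hμb2 hf hg, fun x y hx hxy hy => ?_,
    memℒp_sqrt_b_dw hμb1 hμb2 hg⟩, memℒp_b_dw hμb1 hμb2 hg, memℒp_gI hg,
    fun x y hx hxy hy => ?_⟩
  · refine ⟨dw_ii hg hx hxy hy, ?_⟩
    rw [ww_sub hg hx hxy hy, wD_eq_dw hg hx hxy hy]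
  · refine ⟨(hgI_int hg).intervalIntegrable, ?_⟩
    simp only
    rw [key_b (lt_of_lt_of_le hx hxy), key_b hx]
    exact intervalIntegral.integral_interval_sub_left
      ((hgI_int hg).intervalIntegrable) ((hgI_int hg).intervalIntegrable)

lemma sol_main (hγ : 0 < γ) (hμa0 : 0 ≤ μa) (hμa1 : μa < 1) (hμb1 : 1 ≤ μb) (hμb2 : μb < 2)
    (hf : MemLp f 2 (volume.restrict (Ioo (0 : ℝ) 1)))
    (hg : MemLp g 2 (volume.restrict (Ioo (-1 : ℝ) 0))) :
    SolStrong γ μa μb f g c (uu μa γ f g c) (du μa f g) (fI f)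
      (ww μa μb γ f g c) (dw μb g) (gI g) ∧
      ((((1 : ℝ) + 0) ^ μb : ℝ) • dw μb g 0 = ∫ r in Ioo (-1 : ℝ) 0, g r) := by
  have hflux0 : (((1 : ℝ) + 0) ^ μb : ℝ) • dw μb g 0 = AA g := by
    rw [dw_zero hg]
    norm_num
  constructor
  · refine ⟨memV2_right hμa0 hμa1 hf hg, memV2_left hμa0 hμa1 hμb1 hμb2 hf hg,
      indicator_ae_eq_restrict measurableSet_Ioo, indicator_ae_eq_restrict measurableSet_Ioo,
      ?_, ?_, ?_⟩
    · have hww0 : ww μa μb γ f g c 0 = uu μa γ f g c 0 := by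
        rw [ww, intervalIntegral.integral_same, add_zero]
      rw [hww0]
      exact ((huu_cont hμa0 hμa1 hf hg).tendsto 0).mono_left nhdsWithin_le_nhds
    · rw [hflux0]
      refine Tendsto.congr' (f₁ := fun x => AA g + FF f x) ?_ ?_
      · filter_upwards [self_mem_nhdsWithin] with x hx
        exact (key_a hμa0 hx).symm
      · have : Tendsto (fun x => AA g + FF f x) (𝓝 (0:ℝ)) (𝓝 (AA g + FF f 0)) :=
          (continuous_const.add (hFF_cont hf)).tendsto 0
        rw [FF_zero, add_zero] at this
        exact this.mono_left nhdsWithin_le_nhds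
    · have huu1 : uu μa γ f g c 1 = U1 γ f g c := by
        rw [uu, intervalIntegral.integral_same, add_zero]
      have hdu1 : du μa f g 1 = AA g + FF f 1 := by
        rw [du, Real.one_rpow, Complex.ofReal_one, one_mul]
      rw [huu1, hdu1, U1, mul_div_cancel₀ _ (Complex.ofReal_ne_zero.mpr hγ.ne')]
      ring
  · rw [hflux0, AA]

end Assemble

section Uniq
variable {μa μb γ : ℝ} {f g : ℝ → ℂ} {c : ℂ}

lemma sol_unique (hγ : 0 < γ) (hμa0 : 0 ≤ μa) (hμa1 : μa < 1)
    (hμb1 : 1 ≤ μb) (hμb2 : μb < 2)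
    {u u' gu w w' gw u₁ u₁' gu₁ w₁ w₁' gw₁ : ℝ → ℂ}
    (h : SolStrong γ μa μb f g c u u' gu w w' gw)
    (h₁ : SolStrong γ μa μb f g c u₁ u₁' gu₁ w₁ w₁' gw₁) :
    (∀ x ∈ Ioc (0 : ℝ) 1, u₁ x = u x) ∧ (∀ x ∈ Ioc (-1 : ℝ) 0, w₁ x = w x) := by
  obtain ⟨hU, hW, hgu, hgw, hlim, hflux, hbc⟩ := h
  obtain ⟨hU₁, hW₁, hgu₁, hgw₁, hlim₁, hflux₁, hbc₁⟩ := h₁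
  -- equality of the forcing-term integrals
  have hguae : ∀ᵐ t ∂(volume : Measure ℝ), t ∈ Ioo (0:ℝ) 1 → gu₁ t = gu t :=
    (ae_restrict_iff' measurableSet_Ioo).mp (hgu₁.trans hgu.symm)
  have hgint : ∀ x y : ℝ, 0 < x → x ≤ y → y ≤ 1 →
      (∫ t in x..y, gu₁ t) = ∫ t in x..y, gu t := by
    intro x y hx hxy hy
    apply intervalIntegral.integral_congr_ae
    filter_upwards [hguae, ae_ne_pt 1] with t ht ht1 htm
    rw [Set.uIoc_of_le hxy] at htm
    exact ht ⟨lt_of_lt_of_le hx htm.1.le, lt_of_le_of_ne (htm.2.trans hy) ht1⟩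
  have hgwae : ∀ᵐ t ∂(volume : Measure ℝ), t ∈ Ioo (-1:ℝ) 0 → gw₁ t = gw t :=
    (ae_restrict_iff' measurableSet_Ioo).mp (hgw₁.trans hgw.symm)
  have hgwint : ∀ x y : ℝ, -1 < x → x ≤ y → y ≤ 0 →
      (∫ t in x..y, gw₁ t) = ∫ t in x..y, gw t := by
    intro x y hx hxy hy
    apply intervalIntegral.integral_congr_ae
    filter_upwards [hgwae, ae_ne_pt 0] with t ht ht0 htm
    rw [Set.uIoc_of_le hxy] at htm
    exact ht ⟨lt_of_lt_of_le hx htm.1.le, lt_of_le_of_ne (htm.2.trans hy) ht0⟩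
  -- the flux difference is constant
  have hA : ∀ x : ℝ, 0 < x → x ≤ 1 →
      (x ^ μa : ℝ) • (u₁' x - u' x) = u₁' 1 - u' 1 := by
    intro x hx hx1
    have e₁ := (hU₁.2.2.2 x 1 hx hx1 le_rfl).2
    have e := (hU.2.2.2 x 1 hx hx1 le_rfl).2
    simp only [Real.one_rpow, one_smul] at e₁ e
    rw [hgint x 1 hx hx1 le_rfl] at e₁
    rw [smul_sub]
    linear_combination e - e₁
  have hB : ∀ x : ℝ, -1 < x → x ≤ 0 →
      ((1 + x) ^ μb : ℝ) • (w₁' x - w' x) = w₁' 0 - w' 0 := by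
    intro x hx hx0
    have e₁ := (hW₁.2.2.2 x 0 hx hx0 le_rfl).2
    have e := (hW.2.2.2 x 0 hx hx0 le_rfl).2
    simp only [add_zero, Real.one_rpow, one_smul] at e₁ e
    rw [hgwint x 0 hx hx0 le_rfl] at e₁
    rw [smul_sub]
    linear_combination e - e₁
  -- the two constants agree (via the transmission condition)
  have hAB : u₁' 1 - u' 1 = w₁' 0 - w' 0 := by
    have Tsub := hflux₁.sub hflux
    have hIoc : Ioc (0:ℝ) 1 ∈ 𝓝[>] (0:ℝ) :=
      Ioc_mem_nhdsGT_of_mem ⟨le_refl 0, zero_lt_one⟩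
    have Tconst : Tendsto (fun _ : ℝ => u₁' 1 - u' 1) (𝓝[>] (0:ℝ))
        (𝓝 ((((1:ℝ) + 0) ^ μb : ℝ) • w₁' 0 - (((1:ℝ) + 0) ^ μb : ℝ) • w' 0)) := by
      refine Tsub.congr' ?_
      filter_upwards [hIoc] with x hx
      rw [← smul_sub, hA x hx.1 hx.2]
    have := tendsto_nhds_unique Tconst tendsto_const_nhds
    rw [← this]
    norm_num
  -- the constant is zero (strong degeneracy of b)
  have hB0 : w₁' 0 - w' 0 = 0 := by
    by_contra hne
    set B : ℂ := w₁' 0 - w' 0 with hBdef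
    have hmem := (hW₁.1.2.2.sub hW.1.2.2)
    have hrepr : (fun x => Real.sqrt ((1+x) ^ μb) • w₁' x - Real.sqrt ((1+x) ^ μb) • w' x)
        =ᵐ[volume.restrict (Ioo (-1:ℝ) 0)]
        (fun x => (((1+x) ^ (-(μb/2)) : ℝ)) • B) := by
      rw [Filter.EventuallyEq, ae_restrict_iff' measurableSet_Ioo]
      refine Eventually.of_forall fun x hx => ?_
      have hp : (0:ℝ) < 1 + x := by have := hx.1; linarith
      have hsq : Real.sqrt ((1+x) ^ μb) = (1+x) ^ (-(μb/2)) * (1+x) ^ μb := by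
        rw [Real.sqrt_eq_rpow, ← Real.rpow_mul hp.le, ← Real.rpow_add hp]
        congr 1
        ring
      rw [← smul_sub, hsq, mul_smul, hB x hx.1 hx.2.le]
    have hmem2 := hmem.ae_eq hrepr
    have hint := hmem2.integrable_norm_rpow (by norm_num) (by norm_num)
    have htoReal : ((2:ENNReal)).toReal = (2:ℝ) := by norm_num
    rw [htoReal] at hint
    have hBnorm : (0:ℝ) < ‖B‖ ^ (2:ℝ) := by
      have : ‖B‖ ≠ 0 := norm_ne_zero_iff.mpr hne
      positivity
    have hint2 : IntegrableOn (fun x : ℝ => (1+x) ^ (-μb)) (Ioo (-1:ℝ) 0) volume := by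
      have h3 := hint.mul_const ((‖B‖ ^ (2:ℝ))⁻¹)
      refine h3.congr ?_
      rw [Filter.EventuallyEq, ae_restrict_iff' measurableSet_Ioo]
      refine Eventually.of_forall fun x hx => ?_
      have hp : (0:ℝ) < 1 + x := by have := hx.1; linarith
      rw [norm_smul, Real.norm_eq_abs, abs_of_nonneg (Real.rpow_nonneg hp.le _),
        Real.mul_rpow (Real.rpow_nonneg hp.le _) (norm_nonneg _)]
      have hrr : ((1+x) ^ (-(μb/2))) ^ (2:ℝ) = (1+x) ^ (-μb) := by
        rw [← Real.rpow_mul hp.le]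
        congr 1
        ring
      rw [hrr, mul_assoc, mul_inv_cancel₀ hBnorm.ne', mul_one]
    -- transport to `x ^ (-μb)` on `(0,1)` and contradict `μb ≥ 1`
    have h4 : IntervalIntegrable (fun x : ℝ => (1+x) ^ (-μb)) volume (-1) 0 := by
      rwa [intervalIntegrable_iff_integrableOn_Ioo_of_le (by norm_num : (-1:ℝ) ≤ 0)]
    have h5 := h4.comp_sub_right 1
    have hfun : (fun x : ℝ => (1 + (x - 1)) ^ (-μb)) = fun x : ℝ => x ^ (-μb) := by
      funext x; congr 1; ring
    rw [hfun] at h5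
    norm_num at h5
    rw [intervalIntegrable_iff_integrableOn_Ioo_of_le (by norm_num : (0:ℝ) ≤ 1)] at h5
    rw [intervalIntegral.integrableOn_Ioo_rpow_iff (by norm_num : (0:ℝ) < 1)] at h5
    linarith
  have hA0 : u₁' 1 - u' 1 = 0 := hAB.trans hB0
  have hu'eq : ∀ x ∈ Ioc (0:ℝ) 1, u₁' x = u' x := by
    intro x hx
    have := hA x hx.1 hx.2
    rw [hA0, smul_eq_zero] at this
    rcases this with h' | h'
    · exact absurd h' (by
        have : (0:ℝ) < x ^ μa := Real.rpow_pos_of_pos hx.1 _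
        exact_mod_cast this.ne')
    · exact sub_eq_zero.mp h'
  have hw'eq : ∀ x ∈ Ioc (-1:ℝ) 0, w₁' x = w' x := by
    intro x hx
    have := hB x hx.1 hx.2
    rw [hB0, smul_eq_zero] at this
    rcases this with h' | h'
    · exact absurd h' (by
        have hp : (0:ℝ) < 1 + x := by have := hx.1; linarith
        have : (0:ℝ) < (1+x) ^ μb := Real.rpow_pos_of_pos hp _
        exact_mod_cast this.ne')
    · exact sub_eq_zero.mp h'
  have hu1 : u₁ 1 = u 1 := by
    have h1 : u₁' 1 = u' 1 := hu'eq 1 ⟨zero_lt_one, le_rfl⟩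
    have hγne : (γ:ℂ) ≠ 0 := Complex.ofReal_ne_zero.mpr hγ.ne'
    have : (γ:ℂ) * u₁ 1 = (γ:ℂ) * u 1 := by
      have := hbc₁.trans hbc.symm
      rw [h1] at this
      linear_combination this
    exact mul_left_cancel₀ hγne this
  have huEq : ∀ x ∈ Ioc (0:ℝ) 1, u₁ x = u x := by
    intro x hx
    have e₁ := (hU₁.1.2.1 x 1 hx.1 hx.2 le_rfl).2
    have e := (hU.1.2.1 x 1 hx.1 hx.2 le_rfl).2
    have hint : (∫ t in x..(1:ℝ), u₁' t) = ∫ t in x..(1:ℝ), u' t := by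
      refine intervalIntegral.integral_congr fun t ht => ?_
      rw [Set.uIcc_of_le hx.2] at ht
      exact hu'eq t ⟨lt_of_lt_of_le hx.1 ht.1, ht.2⟩
    rw [hint] at e₁
    linear_combination e - e₁ + hu1
  have hw0 : w₁ 0 = w 0 := by
    have hIoc : Ioc (0:ℝ) 1 ∈ 𝓝[>] (0:ℝ) :=
      Ioc_mem_nhdsGT_of_mem ⟨le_refl 0, zero_lt_one⟩
    have T : Tendsto u₁ (𝓝[>] (0:ℝ)) (𝓝 (w 0)) := by
      refine hlim.congr' ?_
      filter_upwards [hIoc] with x hx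
      exact (huEq x hx).symm
    exact tendsto_nhds_unique hlim₁ T
  refine ⟨huEq, fun x hx => ?_⟩
  have e₁ := (hW₁.1.2.1 x 0 hx.1 hx.2 le_rfl).2
  have e := (hW.1.2.1 x 0 hx.1 hx.2 le_rfl).2
  have hint : (∫ t in x..(0:ℝ), w₁' t) = ∫ t in x..(0:ℝ), w' t := by
    refine intervalIntegral.integral_congr fun t ht => ?_
    rw [Set.uIcc_of_le hx.2] at ht
    exact hw'eq t ⟨lt_of_lt_of_le hx.1 ht.1, ht.2⟩
  rw [hint] at e₁
  linear_combination e - e₁ + hw0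

end Uniq

end SurjAux

/-- For every `f ∈ L²(0,1)`, `g ∈ L²(-1,0)` and `c ∈ ℂ` there is a unique
pair `(u, w)` (unique as functions on `(0,1]` and `(-1,0]` respectively) with `u ∈ V²_a(0,1)`,
`w ∈ V²_b(-1,0)` solving the boundary value problem `SolStrong`; moreover, for this solution
`(b w')(0) = ∫_{-1}^0 g(r) dr`. -/
theorem surjective_strong (γ μa μb : ℝ) (hγ : 0 < γ)
    (hμa0 : 0 ≤ μa) (hμa1 : μa < 1) (hμb1 : 1 ≤ μb) (hμb2 : μb < 2)
    (f g : ℝ → ℂ) (c : ℂ)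
    (hf : MemLp f 2 (volume.restrict (Ioo (0 : ℝ) 1)))
    (hg : MemLp g 2 (volume.restrict (Ioo (-1 : ℝ) 0))) :
    ∃ u u' gu w w' gw : ℝ → ℂ, SolStrong γ μa μb f g c u u' gu w w' gw ∧
      ((((1 : ℝ) + 0) ^ μb : ℝ) • w' 0 = ∫ r in Ioo (-1 : ℝ) 0, g r) ∧
      ∀ u₁ u₁' gu₁ w₁ w₁' gw₁ : ℝ → ℂ, SolStrong γ μa μb f g c u₁ u₁' gu₁ w₁ w₁' gw₁ →
        (∀ x ∈ Ioc (0 : ℝ) 1, u₁ x = u x) ∧ (∀ x ∈ Ioc (-1 : ℝ) 0, w₁ x = w x) := by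
  obtain ⟨hsol, hmore⟩ := sol_main (μa := μa) (μb := μb) (γ := γ) (c := c)
    hγ hμa0 hμa1 hμb1 hμb2 hf hg
  refine ⟨uu μa γ f g c, du μa f g, fI f, ww μa μb γ f g c, dw μb g, gI g,
    hsol, hmore, ?_⟩
  intro u₁ u₁' gu₁ w₁ w₁' gw₁ h₁
  exact sol_unique hγ hμa0 hμa1 hμb1 hμb2 hsol h₁
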